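/- Every group of prime exponent is Z_mon-cofinite. Moreover, every infinite Z_mon-cofinite group is either almost torsion-free or has prime exponent. -/

import Mathlib

/-- `G` is `Z_mon`-cofinite: for every `n ≥ 1` and `g ∈ G`, the set of `n`-th roots of `g`
is either finite or all of `G`. -/
def ZmonCofinite (G : Type*) [Group G] : Prop :=
  ∀ n : ℕ, 1 ≤ n → ∀ g : G,
    {x : G | x ^ n = g}.Finite ∨ {x : G | x ^ n = g} = Set.univ

/-- `G` satisfies the weak cancellation law: for every `n ≥ 1` the map `x ↦ x^n`
is finitely-many-to-one. -/
def WCL (G : Type*) [Group G] : Prop :=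
  ∀ n : ℕ, 1 ≤ n → ∀ a : G, {x : G | x ^ n = a}.Finite

/-- `G` is almost torsion-free: every `n`-socle `G[n]` is finite. -/
def AlmostTorsionFree (G : Type*) [Group G] : Prop :=
  ∀ n : ℕ, 1 ≤ n → {x : G | x ^ n = 1}.Finite

/-- `G` has prime exponent. -/
def HasPrimeExponent (G : Type*) [Group G] : Prop :=
  ∃ p : ℕ, p.Prime ∧ ∀ x : G, x ^ p = 1

/-- Every group of prime exponent is `Z_mon`-cofinite; moreover every infinite
`Z_mon`-cofinite group is either almost torsion-free or has prime exponent. -/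
lemma primeExp_inj {G : Type*} [Group G] {p : ℕ} (hp : p.Prime)
    (hG : ∀ x : G, x ^ p = 1) {n : ℕ} (hn : ¬ p ∣ n) :
    Function.Injective (fun x : G => x ^ n) := by
  obtain ⟨m, -, hm⟩ := Nat.exists_mul_mod_eq_one_of_coprime
    (Nat.coprime_comm.mp (hp.coprime_iff_not_dvd.mpr hn)) hp.one_lt
  have key : ∀ x : G, x ^ (n * m) = x := by
    intro x
    have hdm : p * (n * m / p) + 1 = n * m := by
      conv_rhs => rw [← Nat.div_add_mod (n * m) p]
      rw [hm]
    calc x ^ (n * m) = x ^ (p * (n * m / p) + 1) := by rw [hdm]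
    _ = (x ^ p) ^ (n * m / p) * x := by rw [pow_add, pow_mul, pow_one]
    _ = x := by rw [hG, one_pow, one_mul]
  intro x y hxy
  have : (x ^ n) ^ m = (y ^ n) ^ m := by simpa using congrArg (· ^ m) hxy
  rw [← pow_mul, ← pow_mul, key, key] at this
  exact this

lemma key_lemma {G : Type*} [Group G] [Infinite G] (hZ : ZmonCofinite G) :
    ∀ n : ℕ, 1 ≤ n → (∀ x : G, x ^ n = 1) → HasPrimeExponent G := by
  intro n
  induction n using Nat.strong_induction_on with
  | _ n ih =>
    intro hn hall
    rcases eq_or_lt_of_le hn with h1 | h2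
    · exfalso
      obtain ⟨a, b, hab⟩ := exists_pair_ne G
      have h : ∀ x : G, x = 1 := by
        intro x
        have := hall x
        rw [← h1, pow_one] at this
        exact this
      exact hab ((h a).trans (h b).symm)
    · set p := n.minFac with hpdef
      have hp : p.Prime := Nat.minFac_prime (by omega)
      set m := n / p with hmdef
      have hpm : p * m = n := Nat.mul_div_cancel' (Nat.minFac_dvd n)
      have hm1 : 1 ≤ m := Nat.pos_of_ne_zero fun h0 => by
        rw [h0, mul_zero] at hpm; omega
      have hmlt : m < n := Nat.div_lt_self (by omega) hp.one_lt
      have hmem : ∀ x : G, (x ^ p) ^ m = 1 := by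
        intro x; rw [← pow_mul, hpm]; exact hall x
      rcases hZ m hm1 1 with hF | hU
      · -- the m-socle is finite; some fiber of x ↦ x^p is infinite
        haveI := hF.to_subtype
        set f : G → {x : G | x ^ m = 1} := fun x => ⟨x ^ p, hmem x⟩ with hfdef
        obtain ⟨y, hy⟩ := Finite.exists_infinite_fiber f
        have hpre : f ⁻¹' {y} = {x : G | x ^ p = (y : G)} := by
          ext x
          simp [hfdef, Subtype.ext_iff]
        have hinf : {x : G | x ^ p = (y : G)}.Infinite := by
          rw [← hpre]
          exact Set.infinite_coe_iff.mp hy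
        rcases hZ p hp.one_le (y : G) with hfin | huniv
        · exact absurd hfin hinf
        · have hally : ∀ x : G, x ^ p = (y : G) := by
            intro x
            have : x ∈ {x : G | x ^ p = (y : G)} := huniv ▸ Set.mem_univ x
            exact this
          have h1 : (y : G) = 1 := by
            have := hally 1
            rw [one_pow] at this
            exact this.symm
          exact ⟨p, hp, fun x => by rw [hally x, h1]⟩
      · -- all x satisfy x^m = 1, recurse
        have : ∀ x : G, x ^ m = 1 := by
          intro x
          have : x ∈ {x : G | x ^ m = 1} := hU ▸ Set.mem_univ x
          exact this
        exact ih m hmlt hm1 this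

theorem stmt_2 :
    (∀ (G : Type u) [Group G], HasPrimeExponent G → ZmonCofinite G) ∧
    (∀ (G : Type u) [Group G], Infinite G → ZmonCofinite G →
      AlmostTorsionFree G ∨ HasPrimeExponent G) := by
  constructor
  · rintro G _ ⟨p, hp, hall⟩ n hn g
    by_cases hdvd : p ∣ n
    · obtain ⟨k, rfl⟩ := hdvd
      have h1 : ∀ x : G, x ^ (p * k) = 1 := by
        intro x; rw [pow_mul, hall, one_pow]
      by_cases hg : g = 1
      · right
        ext x
        simp [h1 x, hg]
      · left
        have : {x : G | x ^ (p * k) = g} = ∅ := by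
          ext x
          simp only [Set.mem_setOf_eq, Set.mem_empty_iff_false, iff_false]
          rw [h1 x]
          exact fun h => hg h.symm
        rw [this]
        exact Set.finite_empty
    · left
      have hinj := primeExp_inj hp hall hdvd
      apply Set.Subsingleton.finite
      intro a ha b hb
      exact hinj (ha.trans hb.symm)
  · intro G _ hInf hZ
    by_cases hA : AlmostTorsionFree G
    · exact Or.inl hA
    · right
      simp only [AlmostTorsionFree, not_forall] at hA
      obtain ⟨n, hn, hfin⟩ := hA
      rcases hZ n hn 1 with h | h
      · exact absurd h hfin
      · have hall : ∀ x : G, x ^ n = 1 := by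
          intro x
          have : x ∈ {x : G | x ^ n = 1} := h ▸ Set.mem_univ x
          exact this
        exact key_lemma hZ n hn hall
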